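/- Let k be a field of characteristic p, G a finite group with a normal Sylow p-subgroup P such that G = P ⋊ H with H a p'-group. Then the Jacobson radical satisfies J(kG) = J(kP)·kG = kG·J(kP). -/

import Mathlib

set_option maxHeartbeats 1000000
set_option synthInstance.maxHeartbeats 200000

section Aux

open MonoidAlgebra

-- applying `mapDomainAlgHom` to a `single`
lemma mapDomainAlgHom_single {k : Type*} [CommSemiring k] {G H : Type*} [Monoid G] [Monoid H]
    (f : G →* H) (g : G) (c : k) :
    MonoidAlgebra.mapDomainAlgHom k k f (MonoidAlgebra.single g c)
      = MonoidAlgebra.single (f g) c := by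
  exact MonoidAlgebra.mapDomain_single

-- membership in the Jacobson radical of ⊥
lemma mem_jacobson_bot_of {R : Type*} [Ring R] {x : R}
    (h : ∀ M : Ideal R, M.IsMaximal → x ∈ M) : x ∈ (⊥ : Ideal R).jacobson := by
  unfold Ideal.jacobson
  exact Submodule.mem_sInf.mpr fun M hM => h M hM.2

lemma jacobson_bot_le_of_max {R : Type*} [Ring R] {M : Ideal R} (hM : M.IsMaximal) :
    (⊥ : Ideal R).jacobson ≤ M := sInf_le ⟨bot_le, hM⟩

-- the Jacobson radical maps forward along surjective ring homs
lemma jac_map_mem {R S : Type*} [Ring R] [Ring S] (f : R →+* S) (hf : Function.Surjective f)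
    {x : R} (hx : x ∈ (⊥ : Ideal R).jacobson) : f x ∈ (⊥ : Ideal S).jacobson := by
  apply mem_jacobson_bot_of
  intro M hM
  haveI := hM
  have h1 : x ∈ Ideal.comap f M :=
    jacobson_bot_le_of_max (Ideal.comap_isMaximal_of_surjective f hf) hx
  exact h1

-- semisimple rings have trivial Jacobson radical
lemma jac_bot_of_semisimple (A : Type*) [Ring A] [IsSemisimpleRing A] :
    (⊥ : Ideal A).jacobson = ⊥ := by
  obtain ⟨C, hC⟩ := exists_isCompl ((⊥ : Ideal A).jacobson : Submodule A A)
  by_cases hCt : C = ⊤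
  · have h := hC.inf_eq_bot
    rwa [hCt, inf_top_eq] at h
  · exfalso
    obtain ⟨Mx, hMx, hCM⟩ := Ideal.exists_le_maximal (C : Ideal A) hCt
    have hJ : (⊥ : Ideal A).jacobson ≤ Mx := jacobson_bot_le_of_max hMx
    have htop : (⊤ : Submodule A A) ≤ Mx := by
      rw [← hC.sup_eq_top]; exact sup_le hJ hCM
    exact hMx.ne_top (top_le_iff.mp htop)

-- CORE LEMMA


lemma core_lemma (p : ℕ) (hp : p.Prime) (k : Type*) [Field k] [CharP k p]
    (G : Type*) [Group G] [Finite G] (P : Subgroup G) (hPn : P.Normal) (hPp : IsPGroup p P)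
    (M : Ideal (MonoidAlgebra k G)) (hM : M.IsMaximal)
    {n : G} (hn : n ∈ P) (x y : MonoidAlgebra k G) :
    x * (MonoidAlgebra.single n (1:k) - 1) * y ∈ M := by
  classical
  haveI : Fact p.Prime := ⟨hp⟩
  have hcomm : ∀ (a : k) (r : MonoidAlgebra k G) (s : MonoidAlgebra k G ⧸ M), r • (a • s) = a • (r • s) := by
    intro a r s
    rw [← algebraMap_smul (MonoidAlgebra k G) a s, ← mul_smul, ← Algebra.commutes a r, mul_smul,
      algebraMap_smul]
  have key : ∀ m ∈ P, ∀ s : MonoidAlgebra k G ⧸ M, (MonoidAlgebra.single m (1:k) : MonoidAlgebra k G) • s = s := by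
    set F : Submodule (MonoidAlgebra k G) (MonoidAlgebra k G ⧸ M) :=
      { carrier := {s : MonoidAlgebra k G ⧸ M | ∀ m ∈ P, (MonoidAlgebra.single m (1:k) : MonoidAlgebra k G) • s = s}
        add_mem' := by
          intro a b ha hb m hm
          rw [smul_add, ha m hm, hb m hm]
        zero_mem' := by
          intro m hm
          rw [smul_zero]
        smul_mem' := by
          intro r s hs
          induction r using MonoidAlgebra.induction with
          | zero => intro m hm; rw [zero_smul, smul_zero]
          | single_add g c f hgf hc ih =>
            intro m hm
            have hmem : g⁻¹ * m * g ∈ P := by simpa using hPn.conj_mem m hm g⁻¹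
            have h2 : (single (m * g) c : MonoidAlgebra k G) = (single g c : MonoidAlgebra k G) * single (g⁻¹ * m * g) 1 := by
              rw [MonoidAlgebra.single_mul_single, mul_one]
              congr 1
              group
            have hgen : (single m (1:k) : MonoidAlgebra k G) • ((single g c : MonoidAlgebra k G) • s) = (single g c : MonoidAlgebra k G) • s := by
              rw [← mul_smul, MonoidAlgebra.single_mul_single, one_mul, h2, mul_smul, hs _ hmem]
            rw [add_smul, smul_add, hgen, ih m hm] } with hF
    have hFmem : ∀ s : MonoidAlgebra k G ⧸ M, s ∈ F ↔ ∀ m ∈ P, (MonoidAlgebra.single m (1:k) : MonoidAlgebra k G) • s = s :=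
      fun s => Iff.rfl
    set v : MonoidAlgebra k G ⧸ M := Submodule.Quotient.mk (1:MonoidAlgebra k G) with hv'
    have hv : v ≠ 0 := by
      rw [hv', Ne, Submodule.Quotient.mk_eq_zero]
      intro h1
      exact hM.ne_top ((Ideal.eq_top_iff_one M).mpr h1)
    letI : Module (ZMod p) (MonoidAlgebra k G ⧸ M) := Module.compHom (MonoidAlgebra k G ⧸ M) (ZMod.castHom dvd_rfl k)
    have hzsmul : ∀ (c : ZMod p) (s : MonoidAlgebra k G ⧸ M), c • s = (ZMod.castHom dvd_rfl k c) • s :=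
      fun _ _ => rfl
    set O : Set (MonoidAlgebra k G ⧸ M) := Set.range (fun g : P => (MonoidAlgebra.single (g:G) (1:k) : MonoidAlgebra k G) • v) with hO
    have hOfin : O.Finite := Set.finite_range _
    set V : Submodule (ZMod p) (MonoidAlgebra k G ⧸ M) := Submodule.span (ZMod p) O with hV
    haveI : Module.Finite (ZMod p) V := Module.Finite.span_of_finite _ hOfin
    haveI : Finite V := Module.finite_of_finite (ZMod p)
    have hstab : ∀ (g : P), ∀ w ∈ V, (MonoidAlgebra.single (g:G) (1:k) : MonoidAlgebra k G) • w ∈ V := by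
      intro g w hw
      induction hw using Submodule.span_induction with
      | mem w hwO =>
        obtain ⟨h, rfl⟩ := hwO
        rw [← mul_smul, MonoidAlgebra.single_mul_single, one_mul]
        exact Submodule.subset_span ⟨g * h, rfl⟩
      | zero => rw [smul_zero]; exact V.zero_mem
      | add a b _ _ iha ihb => rw [smul_add]; exact V.add_mem iha ihb
      | smul c a _ iha =>
        rw [hzsmul, hcomm, ← hzsmul]
        exact V.smul_mem c iha
    letI : SMul P V :=
      ⟨fun g w => ⟨(MonoidAlgebra.single (g:G) (1:k) : MonoidAlgebra k G) • (w : MonoidAlgebra k G ⧸ M), hstab g w w.2⟩⟩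
    have hsmul_def : ∀ (g : P) (w : V),
        ((g • w : V) : MonoidAlgebra k G ⧸ M) = (MonoidAlgebra.single (g:G) (1:k) : MonoidAlgebra k G) • (w : MonoidAlgebra k G ⧸ M) := fun _ _ => rfl
    letI : MulAction P V :=
      { one_smul := by
          intro w
          apply Subtype.ext
          rw [hsmul_def]
          show (MonoidAlgebra.single ((1:G)) (1:k) : MonoidAlgebra k G) • (w : MonoidAlgebra k G ⧸ M) = w
          rw [← MonoidAlgebra.one_def, one_smul]
        mul_smul := by
          intro g h w
          apply Subtype.ext
          rw [hsmul_def, hsmul_def, hsmul_def, ← mul_smul, MonoidAlgebra.single_mul_single,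
            one_mul]
          norm_cast }
    have hvV : v ∈ V := by
      apply Submodule.subset_span
      refine ⟨1, ?_⟩
      dsimp only
      rw [Subgroup.coe_one, ← MonoidAlgebra.one_def, one_smul]
    have hmod := hPp.card_modEq_card_fixedPoints V
    have hVcard : p ∣ Nat.card V := by
      haveI : Fintype V := Fintype.ofFinite V
      haveI : Nontrivial V := ⟨⟨⟨v, hvV⟩, 0, by simp [Subtype.ext_iff, hv]⟩⟩
      rw [Nat.card_eq_fintype_card, Module.card_eq_pow_finrank (K := ZMod p) (V := V), ZMod.card]
      exact dvd_pow_self p (Module.finrank_pos (R := ZMod p) (M := V)).ne'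
    have h0fix : (0 : V) ∈ MulAction.fixedPoints P V := by
      intro g
      apply Subtype.ext
      rw [hsmul_def]
      simp
    haveI : Finite (MulAction.fixedPoints P V) := Subtype.finite
    have hfixcard : p ∣ Nat.card (MulAction.fixedPoints P V) :=
      Nat.modEq_zero_iff_dvd.mp ((hmod.symm.trans (Nat.modEq_zero_iff_dvd.mpr hVcard)))
    have hpos : 0 < Nat.card (MulAction.fixedPoints P V) :=
      Nat.card_pos_iff.mpr ⟨⟨⟨0, h0fix⟩⟩, inferInstance⟩
    have h1lt : 1 < Nat.card (MulAction.fixedPoints P V) :=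
      lt_of_lt_of_le hp.one_lt (Nat.le_of_dvd hpos hfixcard)
    haveI : Fintype (MulAction.fixedPoints P V) := Fintype.ofFinite _
    rw [Nat.card_eq_fintype_card] at h1lt
    haveI : Nontrivial (MulAction.fixedPoints P V) := Fintype.one_lt_card_iff_nontrivial.mp h1lt
    obtain ⟨w', hw'⟩ := exists_ne (⟨0, h0fix⟩ : MulAction.fixedPoints P V)
    have hwF : ((w' : V) : MonoidAlgebra k G ⧸ M) ∈ F := by
      rw [hFmem]
      intro m hm
      have h3 : (⟨m, hm⟩ : P) • (w' : V) = (w' : V) := w'.2 _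
      have h4 := Subtype.ext_iff.mp h3
      rwa [hsmul_def] at h4
    have hwne : ((w' : V) : MonoidAlgebra k G ⧸ M) ≠ 0 := by
      intro h
      apply hw'
      apply Subtype.ext
      apply Subtype.ext
      exact h
    haveI : IsSimpleModule (MonoidAlgebra k G) (MonoidAlgebra k G ⧸ M) := isSimpleModule_iff_isCoatom.mpr (Ideal.isMaximal_def.mp hM)
    have hFtop : F = ⊤ := by
      rcases eq_bot_or_eq_top F with hFb | hFt
      · exact absurd ((Submodule.mem_bot (MonoidAlgebra k G)).mp (hFb ▸ hwF)) hwne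
      · exact hFt
    intro m hm s
    exact (hFmem s).mp (hFtop ▸ Submodule.mem_top) m hm
  have hfin : (x * (MonoidAlgebra.single n (1:k) - 1) * y) • (Submodule.Quotient.mk (1:MonoidAlgebra k G) : MonoidAlgebra k G ⧸ M)
      = 0 := by
    rw [mul_smul, mul_smul, sub_smul, one_smul, key n hn, sub_self, smul_zero]
  rwa [← Submodule.Quotient.mk_smul, smul_eq_mul, mul_one, Submodule.Quotient.mk_eq_zero] at hfin


-- `single n 1 - 1 ∈ J(k[P])` for a `p`-group `P`
lemma sub_one_mem_jacobson (p : ℕ) (hp : p.Prime) (k : Type*) [Field k] [CharP k p]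
    (P : Type*) [Group P] [Finite P] (hPp : IsPGroup p P) (m : P) :
    (MonoidAlgebra.single m (1:k) - 1) ∈ (⊥ : Ideal (MonoidAlgebra k P)).jacobson := by
  apply mem_jacobson_bot_of
  intro M hM
  have h := core_lemma p hp k P (⊤ : Subgroup P) inferInstance
    (hPp.to_subgroup ⊤) M hM (Subgroup.mem_top m) 1 1
  simpa using h

-- the augmentation map
lemma aug_ker_isMaximal (k : Type*) [Field k] (Γ : Type*) [Group Γ] :
    (RingHom.ker (MonoidAlgebra.lift k k Γ 1)).IsMaximal := by
  set eps := MonoidAlgebra.lift k k Γ 1 with heps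
  rw [Ideal.isMaximal_def]
  constructor
  · intro h
    have h1 : (1 : MonoidAlgebra k Γ) ∈ RingHom.ker eps := h ▸ Submodule.mem_top
    rw [RingHom.mem_ker, map_one] at h1
    exact one_ne_zero h1
  · intro J hJ
    obtain ⟨x, hxJ, hxk⟩ := SetLike.exists_of_lt hJ
    have hne : eps x ≠ 0 := by
      intro h
      exact hxk (RingHom.mem_ker.mpr h)
    have h1 : x - (eps x) • 1 ∈ RingHom.ker eps := by
      rw [RingHom.mem_ker, map_sub, map_smul, map_one, smul_eq_mul, mul_one, sub_self]
    have h2 : (eps x) • (1 : MonoidAlgebra k Γ) ∈ J := by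
      have h3 := J.sub_mem hxJ (le_of_lt hJ h1)
      simpa using h3
    have h3 : (1 : MonoidAlgebra k Γ) ∈ J := by
      have h4 := J.smul_mem ((algebraMap k (MonoidAlgebra k Γ)) (eps x)⁻¹) h2
      rwa [algebraMap_smul, smul_smul, inv_mul_cancel₀ hne, one_smul] at h4
    exact (Ideal.eq_top_iff_one J).mpr h3

-- every element of the augmentation kernel is a `k`-combination of `single g 1 - 1`
lemma aug_mem_span (k : Type*) [Field k] (Γ : Type*) [Group Γ] {a : MonoidAlgebra k Γ}
    (ha : MonoidAlgebra.lift k k Γ 1 a = 0) :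
    a ∈ Submodule.span k {b : MonoidAlgebra k Γ | ∃ g : Γ, b = MonoidAlgebra.single g 1 - 1} := by
  classical
  have hsplit : ∀ g ∈ a.coeff.support, a.coeff g • (MonoidAlgebra.single g (1:k) - 1)
      = MonoidAlgebra.single g (a.coeff g) - a.coeff g • (1 : MonoidAlgebra k Γ) := by
    intro g _
    rw [smul_sub, MonoidAlgebra.smul_single', mul_one]
  have hsum0 : ∑ g ∈ a.coeff.support, a.coeff g = 0 := by
    have h1 : MonoidAlgebra.lift k k Γ 1 a = ∑ g ∈ a.coeff.support, a.coeff g := by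
      rw [MonoidAlgebra.lift_apply, Finsupp.sum]
      refine Finset.sum_congr rfl fun g _ => ?_
      simp
    rw [h1] at ha
    exact ha
  have hrepr : a = ∑ g ∈ a.coeff.support, a.coeff g • (MonoidAlgebra.single g (1:k) - 1) := by
    rw [Finset.sum_congr rfl hsplit, Finset.sum_sub_distrib, ← Finset.sum_smul, hsum0,
      zero_smul, sub_zero]
    conv_lhs => rw [← MonoidAlgebra.sum_coeff_single a]
    rfl
  rw [hrepr]
  exact Submodule.sum_mem _ fun g _ =>
    Submodule.smul_mem _ _ (Submodule.subset_span ⟨g, rfl⟩)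

-- J(k[Γ]) is contained in the augmentation kernel
lemma jac_le_aug (k : Type*) [Field k] (Γ : Type*) [Group Γ] :
    (⊥ : Ideal (MonoidAlgebra k Γ)).jacobson ≤ RingHom.ker (MonoidAlgebra.lift k k Γ 1) :=
  jacobson_bot_le_of_max (aug_ker_isMaximal k Γ)

-- Maschke: the group algebra of a finite group of invertible order is semisimple,
-- in arbitrary universes, expressed via the Jacobson radical.
lemma jac_bot_group_algebra.{u, v} (k : Type u) [Field k] (Q : Type v) [Group Q] [Finite Q]
    (hcard : (Nat.card Q : k) ≠ 0) :
    (⊥ : Ideal (MonoidAlgebra k Q)).jacobson = ⊥ := by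
  classical
  obtain ⟨Q', _, _, ⟨ee⟩⟩ := Finite.exists_type_univ_nonempty_mulEquiv.{v, u} Q
  haveI : NeZero ((Nat.card Q' : k)) := by
    constructor
    rw [← Nat.card_congr ee.toEquiv]
    exact hcard
  haveI : IsSemisimpleRing (MonoidAlgebra k Q') := inferInstance
  have hss := jac_bot_of_semisimple (MonoidAlgebra k Q')
  let d : MonoidAlgebra k Q ≃ₐ[k] MonoidAlgebra k Q' := MonoidAlgebra.domCongr k k ee
  rw [eq_bot_iff]
  intro x hx
  have h1 : d.toAlgHom.toRingHom x ∈ (⊥ : Ideal (MonoidAlgebra k Q')).jacobson :=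
    jac_map_mem d.toAlgHom.toRingHom d.surjective hx
  rw [hss, Ideal.mem_bot] at h1
  have h3 : x = 0 := by
    have h4 := congrArg d.symm h1
    simpa using h4
  simp [h3]

end Aux

/-- Let `k` be a field of characteristic `p` and `G` a finite group with a normal Sylow
`p`-subgroup `P` such that `G = P ⋊ H` with `H` a `p'`-group.  Then the Jacobson
radical satisfies `J(kG) = J(kP)·kG = kG·J(kP)` (where `J(kP)` is viewed inside `kG`
via the inclusion `P ≤ G`). -/
theorem stmt14 (p : ℕ) (hp : p.Prime)
    (k : Type*) [Field k] [CharP k p]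
    (G : Type*) [Group G] [Fintype G]
    (P H : Subgroup G) (hPnormal : P.Normal) (hPp : IsPGroup p P)
    (hcompl : P.IsComplement' H) (hH : ¬ p ∣ Nat.card H)
    (ι : MonoidAlgebra k P →ₐ[k] MonoidAlgebra k G)
    (hι : ι = MonoidAlgebra.mapDomainAlgHom k k P.subtype) :
    (((⊥ : Ideal (MonoidAlgebra k G)).jacobson : Set (MonoidAlgebra k G)) =
      ↑(AddSubgroup.closure
        {u | ∃ a ∈ (⊥ : Ideal (MonoidAlgebra k P)).jacobson,
          ∃ x : MonoidAlgebra k G, u = ι a * x})) ∧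
    (((⊥ : Ideal (MonoidAlgebra k G)).jacobson : Set (MonoidAlgebra k G)) =
      ↑(AddSubgroup.closure
        {u | ∃ a ∈ (⊥ : Ideal (MonoidAlgebra k P)).jacobson,
          ∃ x : MonoidAlgebra k G, u = x * ι a})) := by
  classical
  -- Step 1 : products through elements of `J(k[P])` lie in `J(k[G])`
  have step1 : ∀ a ∈ (⊥ : Ideal (MonoidAlgebra k P)).jacobson,
      ∀ x y : MonoidAlgebra k G, x * ι a * y ∈ (⊥ : Ideal (MonoidAlgebra k G)).jacobson := by
    intro a ha x y
    have hker : MonoidAlgebra.lift k k ↥P 1 a = 0 :=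
      RingHom.mem_ker.mp (jac_le_aug k ↥P ha)
    have hspan := aug_mem_span k ↥P hker
    clear ha hker
    apply mem_jacobson_bot_of
    intro M hM
    induction hspan using Submodule.span_induction with
    | mem b hb =>
      obtain ⟨g, rfl⟩ := hb
      rw [hι, map_sub, map_one, mapDomainAlgHom_single]
      exact core_lemma p hp k G P hPnormal hPp M hM g.2 x y
    | zero => simpa using M.zero_mem
    | add b c _ _ ihb ihc =>
      rw [map_add, mul_add, add_mul]
      exact M.add_mem ihb ihc
    | smul c b _ ihb =>
      rw [map_smul, mul_smul_comm, smul_mul_assoc, ← algebraMap_smul (MonoidAlgebra k G) c]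
      exact M.smul_mem _ ihb
  -- the two closures are contained in the Jacobson radical
  have hS1le : (↑(AddSubgroup.closure
      {u | ∃ a ∈ (⊥ : Ideal (MonoidAlgebra k P)).jacobson,
        ∃ x : MonoidAlgebra k G, u = ι a * x}) : Set (MonoidAlgebra k G))
      ⊆ ((⊥ : Ideal (MonoidAlgebra k G)).jacobson : Set (MonoidAlgebra k G)) := by
    intro u hu
    refine AddSubgroup.closure_induction ?_ ?_ ?_ ?_ hu
    · rintro w ⟨a, ha, x, rfl⟩
      simpa using step1 a ha 1 x
    · exact Submodule.zero_mem _
    · intro w₁ w₂ _ _ h1 h2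
      exact Submodule.add_mem _ h1 h2
    · intro w _ h1
      exact Submodule.neg_mem _ h1
  have hS2le : (↑(AddSubgroup.closure
      {u | ∃ a ∈ (⊥ : Ideal (MonoidAlgebra k P)).jacobson,
        ∃ x : MonoidAlgebra k G, u = x * ι a}) : Set (MonoidAlgebra k G))
      ⊆ ((⊥ : Ideal (MonoidAlgebra k G)).jacobson : Set (MonoidAlgebra k G)) := by
    intro u hu
    refine AddSubgroup.closure_induction ?_ ?_ ?_ ?_ hu
    · rintro w ⟨a, ha, x, rfl⟩
      simpa using step1 a ha x 1
    · exact Submodule.zero_mem _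
    · intro w₁ w₂ _ _ h1 h2
      exact Submodule.add_mem _ h1 h2
    · intro w _ h1
      exact Submodule.neg_mem _ h1
  -- the quotient map to `k[G/P]`
  set φ : MonoidAlgebra k G →ₐ[k] MonoidAlgebra k (G ⧸ P) :=
    MonoidAlgebra.mapDomainAlgHom k k (QuotientGroup.mk' P) with hφ
  have hφsingle : ∀ (g : G) (c : k),
      φ (MonoidAlgebra.single g c) = MonoidAlgebra.single (QuotientGroup.mk g : G ⧸ P) c := by
    intro g c
    rw [hφ, mapDomainAlgHom_single]
    rfl
  have hφs : Function.Surjective φ := by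
    intro z
    induction z using MonoidAlgebra.induction with
    | zero => exact ⟨0, map_zero φ⟩
    | single_add q c f hqf hc ih =>
      obtain ⟨w, hw⟩ := ih
      refine ⟨MonoidAlgebra.single (Quotient.out q) c + w, ?_⟩
      rw [map_add, hw, hφsingle, QuotientGroup.out_eq']
  have hQcard : (Nat.card (G ⧸ P) : k) ≠ 0 := by
    have h1 := Subgroup.card_eq_card_quotient_mul_card_subgroup P
    have h2 := hcompl.card_mul
    have hp0 : 0 < Nat.card P := Nat.card_pos
    have h3 : Nat.card (G ⧸ P) = Nat.card H := by
      have h4 : Nat.card (G ⧸ P) * Nat.card P = Nat.card H * Nat.card P := by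
        rw [← h1]
        rw [← h2]
        ring
      exact Nat.eq_of_mul_eq_mul_right hp0 h4
    rw [h3]
    intro hcast
    rw [CharP.cast_eq_zero_iff k p] at hcast
    exact hH hcast
  have hJker : ∀ x ∈ (⊥ : Ideal (MonoidAlgebra k G)).jacobson, φ x = 0 := by
    intro x hx
    have h1 := jac_map_mem φ.toRingHom hφs hx
    rw [jac_bot_group_algebra k (G ⧸ P) hQcard, Ideal.mem_bot] at h1
    exact h1
  -- coset representatives
  have hcoset : ∀ g : G, (Quotient.out (QuotientGroup.mk g : G ⧸ P))⁻¹ * g ∈ P := by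
    intro g
    rw [← QuotientGroup.eq]
    exact QuotientGroup.out_eq' _
  -- the kernel of φ is contained in each closure
  have hker1 : ∀ x : MonoidAlgebra k G, φ x = 0 →
      x ∈ AddSubgroup.closure
        {u | ∃ a ∈ (⊥ : Ideal (MonoidAlgebra k P)).jacobson,
          ∃ x : MonoidAlgebra k G, u = ι a * x} := by
    intro x hx0
    set A := AddSubgroup.closure
        {u | ∃ a ∈ (⊥ : Ideal (MonoidAlgebra k P)).jacobson,
          ∃ x : MonoidAlgebra k G, u = ι a * x} with hA
    set τ : MonoidAlgebra k G →+ MonoidAlgebra k G ⧸ A := QuotientAddGroup.mk' A with hτ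
    have hτdiff : ∀ (g : G) (c : k),
        τ (MonoidAlgebra.single g c)
          = τ (MonoidAlgebra.single (Quotient.out (QuotientGroup.mk g : G ⧸ P)) c) := by
      intro g c
      set s := Quotient.out (QuotientGroup.mk g : G ⧸ P) with hs
      have hP' : g * s⁻¹ ∈ P := by
        have h5 := hPnormal.conj_mem _ (hcoset g) s
        rwa [mul_inv_cancel_left] at h5
      have hprod : (ι (MonoidAlgebra.single (⟨g * s⁻¹, hP'⟩ : P) (1:k) - 1))
            * MonoidAlgebra.single s c
          = MonoidAlgebra.single g c - MonoidAlgebra.single s c := by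
        rw [hι, map_sub, map_one, mapDomainAlgHom_single, sub_mul, one_mul,
          MonoidAlgebra.single_mul_single, one_mul]
        norm_num [inv_mul_cancel_right]
      have hmem : MonoidAlgebra.single g c - MonoidAlgebra.single s c ∈ A := by
        rw [← hprod]
        apply AddSubgroup.subset_closure
        exact ⟨_, sub_one_mem_jacobson p hp k ↥P hPp _, MonoidAlgebra.single s c, rfl⟩
      rw [← sub_eq_zero, ← map_sub]
      exact (QuotientAddGroup.eq_zero_iff _).mpr hmem
    have hcompat : ∀ w : MonoidAlgebra k G,
        (Finsupp.liftAddHom (fun q : G ⧸ P => τ.comp (MonoidAlgebra.singleAddHom (Quotient.out q))))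
          (φ w).coeff = τ w := by
      have hext : (Finsupp.liftAddHom
            (fun q : G ⧸ P => τ.comp (MonoidAlgebra.singleAddHom (Quotient.out q)))).comp
            (MonoidAlgebra.coeffAddEquiv.toAddMonoidHom.comp φ.toLinearMap.toAddMonoidHom) = τ := by
        apply MonoidAlgebra.addMonoidHom_ext
        intro g c
        show (Finsupp.liftAddHom (fun q : G ⧸ P => τ.comp (MonoidAlgebra.singleAddHom (Quotient.out q))))
            (φ (MonoidAlgebra.single g c)).coeff = τ (MonoidAlgebra.single g c)
        rw [hφsingle, MonoidAlgebra.coeff_single, Finsupp.liftAddHom_apply_single]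
        exact (hτdiff g c).symm
      intro w
      exact DFunLike.congr_fun hext w
    have h0 : τ x = 0 := by
      rw [← hcompat x, hx0, MonoidAlgebra.coeff_zero, map_zero]
    exact (QuotientAddGroup.eq_zero_iff x).mp h0
  have hker2 : ∀ x : MonoidAlgebra k G, φ x = 0 →
      x ∈ AddSubgroup.closure
        {u | ∃ a ∈ (⊥ : Ideal (MonoidAlgebra k P)).jacobson,
          ∃ x : MonoidAlgebra k G, u = x * ι a} := by
    intro x hx0
    set A := AddSubgroup.closure
        {u | ∃ a ∈ (⊥ : Ideal (MonoidAlgebra k P)).jacobson,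
          ∃ x : MonoidAlgebra k G, u = x * ι a} with hA
    set τ : MonoidAlgebra k G →+ MonoidAlgebra k G ⧸ A := QuotientAddGroup.mk' A with hτ
    have hτdiff : ∀ (g : G) (c : k),
        τ (MonoidAlgebra.single g c)
          = τ (MonoidAlgebra.single (Quotient.out (QuotientGroup.mk g : G ⧸ P)) c) := by
      intro g c
      set s := Quotient.out (QuotientGroup.mk g : G ⧸ P) with hs
      have hP' : s⁻¹ * g ∈ P := hcoset g
      have hprod : MonoidAlgebra.single s c
            * (ι (MonoidAlgebra.single (⟨s⁻¹ * g, hP'⟩ : P) (1:k) - 1))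
          = MonoidAlgebra.single g c - MonoidAlgebra.single s c := by
        rw [hι, map_sub, map_one, mapDomainAlgHom_single, mul_sub, mul_one,
          MonoidAlgebra.single_mul_single, mul_one]
        norm_num [mul_inv_cancel_left]
      have hmem : MonoidAlgebra.single g c - MonoidAlgebra.single s c ∈ A := by
        rw [← hprod]
        apply AddSubgroup.subset_closure
        exact ⟨_, sub_one_mem_jacobson p hp k ↥P hPp _, MonoidAlgebra.single s c, rfl⟩
      rw [← sub_eq_zero, ← map_sub]
      exact (QuotientAddGroup.eq_zero_iff _).mpr hmem
    have hcompat : ∀ w : MonoidAlgebra k G,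
        (Finsupp.liftAddHom (fun q : G ⧸ P => τ.comp (MonoidAlgebra.singleAddHom (Quotient.out q))))
          (φ w).coeff = τ w := by
      have hext : (Finsupp.liftAddHom
            (fun q : G ⧸ P => τ.comp (MonoidAlgebra.singleAddHom (Quotient.out q)))).comp
            (MonoidAlgebra.coeffAddEquiv.toAddMonoidHom.comp φ.toLinearMap.toAddMonoidHom) = τ := by
        apply MonoidAlgebra.addMonoidHom_ext
        intro g c
        show (Finsupp.liftAddHom (fun q : G ⧸ P => τ.comp (MonoidAlgebra.singleAddHom (Quotient.out q))))
            (φ (MonoidAlgebra.single g c)).coeff = τ (MonoidAlgebra.single g c)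
        rw [hφsingle, MonoidAlgebra.coeff_single, Finsupp.liftAddHom_apply_single]
        exact (hτdiff g c).symm
      intro w
      exact DFunLike.congr_fun hext w
    have h0 : τ x = 0 := by
      rw [← hcompat x, hx0, MonoidAlgebra.coeff_zero, map_zero]
    exact (QuotientAddGroup.eq_zero_iff x).mp h0
  constructor
  · apply Set.Subset.antisymm
    · intro x hx
      exact hker1 x (hJker x hx)
    · exact hS1le
  · apply Set.Subset.antisymm
    · intro x hx
      exact hker2 x (hJker x hx)
    · exact hS2le
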